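/- With A as above, the point p = (1,0,0) ∈ S² is a regular value of A with exactly two preimages (π/2, 0) and (3π/2, 0), and at both preimages the Jacobian determinant det(∂_s A, ∂_x A, A) is strictly positive (equal to sin s at (π/2,0) and to −sin s at (3π/2,0)). -/

import Mathlib

open Real Set

/-- First component of `A : S¹ × S¹ → S²`. -/
noncomputable def A1 (s x : ℝ) : ℝ :=
  if 0 ≤ Real.sin s then Real.sin s * Real.cos x else -(Real.sin s * Real.cos x)

noncomputable def A2 (s x : ℝ) : ℝ := Real.sin s * Real.sin x

noncomputable def A3 (s x : ℝ) : ℝ := Real.cos s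

/-- Jacobian determinant `det (∂ₛA, ∂ₓA, A)`. -/
noncomputable def jacA (s x : ℝ) : ℝ :=
  Matrix.det !![deriv (fun s' => A1 s' x) s, deriv (fun x' => A1 s x') x, A1 s x;
    deriv (fun s' => A2 s' x) s, deriv (fun x' => A2 s x') x, A2 s x;
    deriv (fun s' => A3 s' x) s, deriv (fun x' => A3 s x') x, A3 s x]

lemma sin3 : Real.sin (3*π/2) = -1 := by
  rw [show (3*π/2 : ℝ) = π + π/2 by ring, Real.sin_add]; simp

lemma cos3 : Real.cos (3*π/2) = 0 := by
  rw [show (3*π/2 : ℝ) = π + π/2 by ring, Real.cos_add]; simp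

lemma a1_pi2 (x : ℝ) : A1 (π/2) x = Real.cos x := by
  simp [A1, Real.sin_pi_div_two]

lemma a1_3pi2 (x : ℝ) : A1 (3*π/2) x = Real.cos x := by
  rw [A1, sin3]; norm_num

lemma dA1s_pi2 : deriv (fun s' => A1 s' 0) (π/2) = 0 := by
  have hev : (fun s' => A1 s' 0) =ᶠ[nhds (π/2)] Real.sin := by
    have hopen : IsOpen {s : ℝ | 0 < Real.sin s} :=
      isOpen_lt continuous_const Real.continuous_sin
    have hmem : (π/2 : ℝ) ∈ {s : ℝ | 0 < Real.sin s} := by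
      simp [Real.sin_pi_div_two]
    filter_upwards [hopen.mem_nhds hmem] with s hs
    simp [A1, le_of_lt hs]
  rw [hev.deriv_eq, Real.deriv_sin, Real.cos_pi_div_two]

lemma dA1s_3pi2 : deriv (fun s' => A1 s' 0) (3*π/2) = 0 := by
  have hev : (fun s' => A1 s' 0) =ᶠ[nhds (3*π/2)] (fun s => -Real.sin s) := by
    have hopen : IsOpen {s : ℝ | Real.sin s < 0} :=
      isOpen_lt Real.continuous_sin continuous_const
    have hmem : (3*π/2 : ℝ) ∈ {s : ℝ | Real.sin s < 0} := by
      simp [sin3]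
    filter_upwards [hopen.mem_nhds hmem] with s hs
    simp [A1, not_le.mpr hs]
  rw [hev.deriv_eq]
  have : deriv (fun s => -Real.sin s) (3*π/2) = -Real.cos (3*π/2) := by
    simp
  rw [this, cos3, neg_zero]

lemma dA1x_pi2 : deriv (fun x' => A1 (π/2) x') 0 = 0 := by
  have : (fun x' => A1 (π/2) x') = Real.cos := funext a1_pi2
  rw [this, Real.deriv_cos, Real.sin_zero, neg_zero]

lemma dA1x_3pi2 : deriv (fun x' => A1 (3*π/2) x') 0 = 0 := by
  have : (fun x' => A1 (3*π/2) x') = Real.cos := funext a1_3pi2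
  rw [this, Real.deriv_cos, Real.sin_zero, neg_zero]

lemma dA2s (s : ℝ) : deriv (fun s' => A2 s' 0) s = 0 := by
  have : (fun s' => A2 s' 0) = fun _ => (0:ℝ) := by
    funext s'; simp [A2]
  rw [this, deriv_const]

lemma dA2x_pi2 : deriv (fun x' => A2 (π/2) x') 0 = 1 := by
  have : (fun x' => A2 (π/2) x') = Real.sin := by
    funext x'; simp [A2, Real.sin_pi_div_two]
  rw [this, Real.deriv_sin, Real.cos_zero]

lemma dA2x_3pi2 : deriv (fun x' => A2 (3*π/2) x') 0 = -1 := by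
  have : (fun x' => A2 (3*π/2) x') = fun x' => -Real.sin x' := by
    funext x'; simp [A2, sin3]
  rw [this]
  have : deriv (fun x' => -Real.sin x') 0 = -Real.cos 0 := by simp
  rw [this, Real.cos_zero]

lemma dA3s (x s : ℝ) : deriv (fun s' => A3 s' x) s = -Real.sin s := by
  have : (fun s' => A3 s' x) = Real.cos := funext fun s' => rfl
  rw [this, Real.deriv_cos]

lemma dA3x (s : ℝ) : deriv (fun x' => A3 s x') 0 = 0 := by
  have : (fun x' => A3 s x') = fun _ => Real.cos s := rfl
  rw [this, deriv_const]

lemma jac_pi2 : jacA (π/2) 0 = 1 := by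
  rw [jacA, dA1s_pi2, dA1x_pi2, dA2s, dA2x_pi2, dA3s, dA3x]
  simp [A1, A2, A3, Real.sin_pi_div_two, Real.cos_pi_div_two, Matrix.det_fin_three]

lemma jac_3pi2 : jacA (3*π/2) 0 = 1 := by
  rw [jacA, dA1s_3pi2, dA1x_3pi2, dA2s, dA2x_3pi2, dA3s, dA3x]
  rw [a1_3pi2]
  simp [A2, A3, sin3, cos3, Matrix.det_fin_three]

lemma contdiff_g : ContDiff ℝ 1 (fun p : ℝ × ℝ =>
    (Real.sin p.1 * Real.cos p.2, Real.sin p.1 * Real.sin p.2, Real.cos p.1)) :=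
  ContDiff.prodMk ((Real.contDiff_sin.comp contDiff_fst).mul (Real.contDiff_cos.comp contDiff_snd))
    (ContDiff.prodMk ((Real.contDiff_sin.comp contDiff_fst).mul (Real.contDiff_sin.comp contDiff_snd))
      (Real.contDiff_cos.comp contDiff_fst))

lemma contdiff_g2 : ContDiff ℝ 1 (fun p : ℝ × ℝ =>
    (-(Real.sin p.1 * Real.cos p.2), Real.sin p.1 * Real.sin p.2, Real.cos p.1)) :=
  ContDiff.prodMk (((Real.contDiff_sin.comp contDiff_fst).mul (Real.contDiff_cos.comp contDiff_snd)).neg)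
    (ContDiff.prodMk ((Real.contDiff_sin.comp contDiff_fst).mul (Real.contDiff_sin.comp contDiff_snd))
      (Real.contDiff_cos.comp contDiff_fst))

/-- `p = (1,0,0)` is a regular value of `A` with exactly the two preimages `(π/2,0)` and
`(3π/2,0)` (in the fundamental domain `[0,2π) × [0,2π)`); `A` is differentiable at both
preimages, and there the Jacobian determinant `det(∂ₛA, ∂ₓA, A)` is strictly positive,
equal to `sin s` at `(π/2,0)` and to `−sin s` at `(3π/2,0)`. -/
theorem stmt1 :
    ({p : ℝ × ℝ | p.1 ∈ Ico 0 (2*π) ∧ p.2 ∈ Ico 0 (2*π) ∧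
        A1 p.1 p.2 = 1 ∧ A2 p.1 p.2 = 0 ∧ A3 p.1 p.2 = 0}
      = {(π/2, 0), (3*π/2, 0)}) ∧
    ContDiffAt ℝ 1 (fun p : ℝ × ℝ => (A1 p.1 p.2, A2 p.1 p.2, A3 p.1 p.2)) (π/2, 0) ∧
    ContDiffAt ℝ 1 (fun p : ℝ × ℝ => (A1 p.1 p.2, A2 p.1 p.2, A3 p.1 p.2)) (3*π/2, 0) ∧
    jacA (π/2) 0 = Real.sin (π/2) ∧
    jacA (3*π/2) 0 = -Real.sin (3*π/2) ∧
    0 < jacA (π/2) 0 ∧ 0 < jacA (3*π/2) 0 := by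
  have hπ := Real.pi_pos
  refine ⟨?_, ?_, ?_, ?_, ?_, ?_, ?_⟩
  · ext p
    simp only [mem_setOf_eq, mem_Ico, mem_insert_iff, mem_singleton_iff, Prod.ext_iff]
    constructor
    · rintro ⟨⟨hs0, hs2⟩, ⟨hx0, hx2⟩, h1, _h2, h3⟩
      rw [show A3 p.1 p.2 = Real.cos p.1 from rfl, Real.cos_eq_zero_iff] at h3
      obtain ⟨k, hk⟩ := h3
      have hc0 : (0:ℝ) ≤ 2*(k:ℝ)+1 := by nlinarith [hk ▸ hs0]
      have hc4 : (2*(k:ℝ)+1) < 4 := by nlinarith [hk ▸ hs2]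
      have hk0 : (0:ℤ) ≤ 2*k+1 := by exact_mod_cast hc0
      have hk4 : (2*k+1 : ℤ) < 4 := by exact_mod_cast hc4
      have hk01 : k = 0 ∨ k = 1 := by omega
      rcases hk01 with rfl | rfl
      · have hp1 : p.1 = π/2 := by rw [hk]; push_cast; ring
        rw [hp1, a1_pi2] at h1
        rw [Real.cos_eq_one_iff_of_lt_of_lt (by linarith) hx2] at h1
        exact Or.inl ⟨hp1, h1⟩
      · have hp1 : p.1 = 3*π/2 := by rw [hk]; push_cast; ring
        rw [hp1, a1_3pi2] at h1
        rw [Real.cos_eq_one_iff_of_lt_of_lt (by linarith) hx2] at h1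
        exact Or.inr ⟨hp1, h1⟩
    · rintro (⟨h1, h2⟩ | ⟨h1, h2⟩) <;> rw [h1, h2]
      · exact ⟨⟨by linarith, by linarith⟩, ⟨le_refl 0, by linarith⟩,
          by rw [a1_pi2]; simp, by simp [A2], by simp [A3]⟩
      · exact ⟨⟨by linarith, by linarith⟩, ⟨le_refl 0, by linarith⟩,
          by rw [a1_3pi2]; simp, by simp [A2], by simp [A3, cos3]⟩
  · apply contdiff_g.contDiffAt.congr_of_eventuallyEq
    have hopen : IsOpen {p : ℝ × ℝ | 0 < Real.sin p.1} :=
      isOpen_lt continuous_const (Real.continuous_sin.comp continuous_fst)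
    have hmem : ((π/2 : ℝ), (0:ℝ)) ∈ {p : ℝ × ℝ | 0 < Real.sin p.1} := by
      simp [Real.sin_pi_div_two]
    filter_upwards [hopen.mem_nhds hmem] with p hp
    simp [A1, A2, A3, le_of_lt hp]
  · apply contdiff_g2.contDiffAt.congr_of_eventuallyEq
    have hopen : IsOpen {p : ℝ × ℝ | Real.sin p.1 < 0} :=
      isOpen_lt (Real.continuous_sin.comp continuous_fst) continuous_const
    have hmem : ((3*π/2 : ℝ), (0:ℝ)) ∈ {p : ℝ × ℝ | Real.sin p.1 < 0} := by
      simp [sin3]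
    filter_upwards [hopen.mem_nhds hmem] with p hp
    simp [A1, A2, A3, not_le.mpr hp]
  · rw [jac_pi2, Real.sin_pi_div_two]
  · rw [jac_3pi2, sin3]; ring
  · rw [jac_pi2]; norm_num
  · rw [jac_3pi2]; norm_num
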